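/- arXiv:1010.0327 — 2 statements merged into one kernel-verified Lean document; each statement's English description precedes it below -/
import Mathlib

section
/- Let M₁, M₂ be countable elementary submodels of H_{ω₂} satisfying the compatibility condition (each intersection is an initial segment or an element of the other, and the fence sets are finite). If there exist λ₁ ∈ M₁ \ M₂ and λ₂ ∈ M₂ \ M₁ with λ₁, λ₂ < sup(M₁ ∩ M₂ ∩ Ord), then a contradiction follows; hence below sup(M₁ ∩ M₂ ∩ Ord) one of M₁ ∩ Ord, M₂ ∩ Ord is contained in the other. -/
open FirstOrder

/-- The language with a single binary relation symbol (membership). -/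
inductive memRel : ℕ → Type
  | mem : memRel 2

/-- The language of set theory: one binary relation `∈`. -/
def memLang : Language := ⟨fun _ => Empty, memRel⟩

/-- `H κ` is the collection of sets of hereditary cardinality `< κ`. -/
def HSet (κ : Cardinal.{0}) : Set ZFSet.{0} :=
  {x | ZFSet.Hereditarily (fun y => Cardinal.mk y.toSet < Cardinal.lift.{1} κ) x}

/-- `H κ` as a structure in the language of set theory. -/
noncomputable instance HSetStructure (κ : Cardinal.{0}) : memLang.Structure (HSet κ) where
  funMap {_n} f := Empty.elim f
  RelMap {_n} r := memRel.rec (motive := fun n _ => (Fin n → HSet κ) → Prop)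
    (fun v => (v 0).1 ∈ (v 1).1) r

/-- The set of ordinals of a submodel `M`, identified via von Neumann rank. -/
def ordTrace {κ : Cardinal.{0}} (M : Set (HSet κ)) : Set Ordinal.{0} :=
  {o | ∃ x : HSet κ, x ∈ M ∧ x.1.IsOrdinal ∧ x.1.rank = o}

/-- The `T₁`-fence for `T₂` (for sets of ordinals `T₁, T₂` with common supremum `δ`):
the finite set of minimal elements of `T₁` above points of `T₂` past `δ`. -/
noncomputable def fence (T₁ T₂ : Set Ordinal) (δ : Ordinal) : Set Ordinal :=
  {o | ∃ l ∈ T₂, δ < l ∧ l < sSup T₁ ∧ o = sInf (T₁ ∩ Set.Ici l)} ∪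
    {sInf (T₁ ∩ Set.Ici δ)}

namespace ZFProof

open Order Language

/-! ### von Neumann naturals -/

/-- von Neumann naturals as ZFSets -/
def natZ : ℕ → ZFSet.{0}
  | 0 => ∅
  | n + 1 => insert (natZ n) (natZ n)

theorem mem_natZ {z : ZFSet} : ∀ {n}, z ∈ natZ n ↔ ∃ k < n, z = natZ k
  | 0 => by simp [natZ]
  | n + 1 => by
    simp only [natZ, ZFSet.mem_insert_iff, mem_natZ (n := n)]
    constructor
    · rintro (rfl | ⟨k, hk, rfl⟩)
      · exact ⟨n, Nat.lt_succ_self n, rfl⟩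
      · exact ⟨k, hk.trans (Nat.lt_succ_self n), rfl⟩
    · rintro ⟨k, hk, rfl⟩
      rcases Nat.lt_succ_iff_lt_or_eq.1 hk with h | rfl
      · exact Or.inr ⟨k, h, rfl⟩
      · exact Or.inl rfl

theorem isOrdinal_empty : ZFSet.IsOrdinal ∅ :=
  ⟨fun y hy => absurd hy (ZFSet.notMem_empty y), fun _ _ h => absurd h (ZFSet.notMem_empty _)⟩

theorem isOrdinal_insert {x : ZFSet} (h : x.IsOrdinal) : ZFSet.IsOrdinal (insert x x) := by
  constructor
  · intro z hz
    rcases ZFSet.mem_insert_iff.1 hz with rfl | hz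
    · exact fun w hw => ZFSet.mem_insert_of_mem _ hw
    · exact fun w hw => ZFSet.mem_insert_of_mem _ (h.mem_trans hw hz)
  · intro y z w hyz hzw hw
    rcases ZFSet.mem_insert_iff.1 hw with rfl | hw
    · exact h.mem_trans hyz hzw
    · exact h.mem_trans' hyz hzw hw

theorem isOrdinal_mem {x y : ZFSet} (h : x.IsOrdinal) (hy : y ∈ x) : y.IsOrdinal := by
  constructor
  · intro a ha b hb
    exact h.mem_trans' hb ha hy
  · intro a b c hab hbc hc
    exact h.mem_trans' hab hbc (h.mem_trans hc hy)

theorem isOrdinal_natZ : ∀ n, (natZ n).IsOrdinal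
  | 0 => isOrdinal_empty
  | n + 1 => isOrdinal_insert (isOrdinal_natZ n)

theorem rank_natZ : ∀ n, (natZ n).rank = n
  | 0 => ZFSet.rank_empty
  | n + 1 => by
    rw [natZ, ZFSet.rank_insert, rank_natZ n, max_eq_left (le_succ _), Nat.cast_add,
      Nat.cast_one, Ordinal.add_one_eq_succ]

theorem rank_insert_self {x : ZFSet} : (insert x x).rank = succ x.rank := by
  rw [ZFSet.rank_insert, max_eq_left (le_succ _)]

/-- minimal element with a property -/
theorem exists_min {x : ZFSet} (P : ZFSet → Prop) (h : ∃ z ∈ x, P z) :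
    ∃ z ∈ x, P z ∧ ∀ w ∈ z, w ∈ x → ¬P w := by
  obtain ⟨z, hz⟩ := ZFSet.mem_wf.has_min {z | z ∈ x ∧ P z}
    (by obtain ⟨z, h1, h2⟩ := h; exact ⟨z, h1, h2⟩)
  exact ⟨z, hz.1.1, hz.1.2, fun w hwz hwx hPw => hz.2 w ⟨hwx, hPw⟩ hwz⟩

theorem empty_mem_of_ne {x : ZFSet} (hx : x.IsOrdinal) (h : x ≠ ∅) : ∅ ∈ x := by
  have hne : ∃ z ∈ x, True := by
    rcases ZFSet.eq_empty_or_nonempty x with rfl | ⟨z, hz⟩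
    · exact absurd rfl h
    · exact ⟨z, hz, trivial⟩
  obtain ⟨z, hzx, -, hmin⟩ := exists_min _ hne
  have hz : z = ∅ := (ZFSet.eq_empty z).2 fun w hw =>
    hmin w hw (hx.mem_trans hw hzx) trivial
  exact hz ▸ hzx

/-- comparability of a von Neumann natural with any ordinal -/
theorem natZ_trichotomy : ∀ n {v : ZFSet}, v.IsOrdinal →
    v ∈ natZ n ∨ v = natZ n ∨ natZ n ∈ v := by
  intro n
  induction n using Nat.strong_induction_on with
  | _ n IH =>
    intro v hv
    match n with
    | 0 =>
      by_cases h : v = ∅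
      · exact Or.inr (Or.inl h)
      · exact Or.inr (Or.inr (empty_mem_of_ne hv h))
    | n + 1 =>
      rcases IH n (Nat.lt_succ_self n) hv with h | rfl | h
      · exact Or.inl (ZFSet.mem_insert_of_mem _ h)
      · exact Or.inl (ZFSet.mem_insert _ _)
      · by_cases hvn : v = natZ (n + 1)
        · exact Or.inr (Or.inl hvn)
        refine Or.inr (Or.inr ?_)
        have hsub : natZ (n + 1) ⊆ v := by
          intro w hw
          rcases ZFSet.mem_insert_iff.1 hw with rfl | hw
          · exact h
          · exact hv.mem_trans hw h
        have hS : ∃ u ∈ v, u ∉ natZ (n + 1) := by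
          by_contra hc
          push_neg at hc
          exact hvn (ZFSet.ext fun z => ⟨fun hz => hc z hz, fun hz => hsub hz⟩)
        obtain ⟨u, huv, hun, hmin⟩ := exists_min _ hS
        have hu : u.IsOrdinal := isOrdinal_mem hv huv
        have hueq : u = natZ (n + 1) := by
          apply ZFSet.ext
          intro w
          constructor
          · intro hwu
            by_contra hwn
            exact hmin w hwu (hv.mem_trans hwu huv) hwn
          · intro hwn
            rcases mem_natZ.1 hwn with ⟨k, hk, rfl⟩
            rcases IH k hk hu with h' | rfl | h'
            · exact absurd ((isOrdinal_natZ (n+1)).mem_trans h'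
                (mem_natZ.2 ⟨k, hk, rfl⟩)) hun
            · exact absurd (mem_natZ.2 ⟨k, hk, rfl⟩) hun
            · exact h'
        exact hueq ▸ huv

theorem natZ_mem_of_omega0_le_rank {x : ZFSet} (hx : x.IsOrdinal)
    (hr : Ordinal.omega0 ≤ x.rank) (n : ℕ) : natZ n ∈ x := by
  rcases natZ_trichotomy n hx with h | rfl | h
  · have := ZFSet.rank_lt_of_mem h
    rw [rank_natZ] at this
    exact absurd hr (not_le.2 (this.trans (Ordinal.nat_lt_omega0 n)))
  · rw [rank_natZ] at hr
    exact absurd hr (not_le.2 (Ordinal.nat_lt_omega0 n))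
  · exact h

/-! ### `ω` as a ZFSet -/

theorem mk_ofNat : ∀ n, ZFSet.mk (PSet.ofNat n) = natZ n
  | 0 => rfl
  | n + 1 => by
    show ZFSet.mk (PSet.insert _ _) = insert (natZ n) (natZ n)
    rw [← mk_ofNat n]
    rfl

theorem mem_omega_iff {z : ZFSet} : z ∈ ZFSet.omega.{0} ↔ ∃ n, z = natZ n := by
  constructor
  · intro hz
    induction z using Quotient.inductionOn with
    | h p =>
      obtain ⟨⟨n⟩, h⟩ : p ∈ PSet.omega := ZFSet.mk_mem_iff.1 hz
      exact ⟨n, (ZFSet.sound h).trans (mk_ofNat n)⟩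
  · rintro ⟨n, rfl⟩
    induction n with
    | zero => exact ZFSet.omega_zero
    | succ n ih => exact ZFSet.omega_succ ih

/-! ### `HSet` closure facts -/

noncomputable abbrev κ₂ : Cardinal.{0} := Cardinal.aleph 2

theorem aleph0_le_lift : Cardinal.aleph0 ≤ Cardinal.lift.{1} κ₂ := by
  rw [← Cardinal.lift_aleph0.{1,0}]
  exact Cardinal.lift_le.2 (Cardinal.aleph0_le_aleph 2)

theorem aleph0_lt_lift' : Cardinal.aleph0 < Cardinal.lift.{1} κ₂ := by
  rw [Cardinal.aleph0_lt_lift, ← Cardinal.aleph_zero]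
  exact Cardinal.aleph_lt_aleph.2 (by norm_num)

theorem HSet_mem_of_mem {κ : Cardinal.{0}} {x y : ZFSet} (hx : x ∈ HSet κ) (hy : y ∈ x) :
    y ∈ HSet κ := ZFSet.Hereditarily.mem hx hy

theorem empty_mem_HSet : (∅ : ZFSet) ∈ HSet κ₂ := by
  rw [HSet, Set.mem_setOf_eq, ZFSet.hereditarily_iff]
  refine ⟨?_, fun y hy => absurd hy (ZFSet.notMem_empty y)⟩
  simp only [show (∅ : ZFSet).toSet = ∅ from ZFSet.coe_empty, Cardinal.mk_emptyCollection]
  exact lt_of_lt_of_le Cardinal.aleph0_pos aleph0_le_lift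

theorem insert_mem_HSet {x y : ZFSet} (hx : x ∈ HSet κ₂) (hy : y ∈ HSet κ₂) :
    insert x y ∈ HSet κ₂ := by
  rw [HSet, Set.mem_setOf_eq, ZFSet.hereditarily_iff]
  refine ⟨?_, fun z hz => ?_⟩
  · rw [show (insert x y).toSet = insert x y.toSet from ZFSet.coe_insert x y]
    calc Cardinal.mk _ ≤ Cardinal.mk y.toSet + 1 := Cardinal.mk_insert_le
    _ < Cardinal.lift.{1} κ₂ :=
        Cardinal.add_lt_of_lt aleph0_le_lift (ZFSet.Hereditarily.self hy)
          (lt_of_lt_of_le Cardinal.one_lt_aleph0 aleph0_le_lift)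
  · rcases ZFSet.mem_insert_iff.1 hz with rfl | hz
    · exact hx
    · exact ZFSet.Hereditarily.mem hy hz

theorem natZ_mem_HSet : ∀ n, natZ n ∈ HSet κ₂
  | 0 => empty_mem_HSet
  | n + 1 => insert_mem_HSet (natZ_mem_HSet n) (natZ_mem_HSet n)

theorem natZ_injective : Function.Injective natZ := fun m n h => by
  have := rank_natZ m ▸ rank_natZ n ▸ congrArg ZFSet.rank h
  exact_mod_cast this

theorem toSet_omega : ZFSet.omega.{0}.toSet = Set.range natZ := by
  ext z
  simp [show z ∈ ZFSet.omega.{0}.toSet ↔ z ∈ ZFSet.omega.{0} from Iff.rfl, mem_omega_iff, Set.mem_range, eq_comm]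

theorem mk_omega_toSet : Cardinal.mk ZFSet.omega.{0}.toSet = Cardinal.aleph0 := by
  rw [toSet_omega]
  have h := Cardinal.mk_range_eq_of_injective (f := natZ) natZ_injective
  rw [Cardinal.mk_nat, Cardinal.lift_id', Cardinal.lift_aleph0] at h
  exact h

theorem omega_mem_HSet : ZFSet.omega.{0} ∈ HSet κ₂ := by
  rw [HSet, Set.mem_setOf_eq, ZFSet.hereditarily_iff]
  refine ⟨?_, fun y hy => ?_⟩
  · rw [mk_omega_toSet]
    exact aleph0_lt_lift'
  · rcases mem_omega_iff.1 hy with ⟨n, rfl⟩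
    exact natZ_mem_HSet n

theorem mk_insert_omega_toSet (x : ZFSet) :
    Cardinal.mk (insert x ZFSet.omega.{0}).toSet = Cardinal.aleph0 := by
  rw [show (insert x ZFSet.omega.{0}).toSet = insert x ZFSet.omega.{0}.toSet from ZFSet.coe_insert x _]
  apply le_antisymm
  · calc Cardinal.mk _ ≤ Cardinal.mk ZFSet.omega.{0}.toSet + 1 := Cardinal.mk_insert_le
    _ = Cardinal.aleph0 := by rw [mk_omega_toSet, Cardinal.add_one_eq le_rfl]
  · rw [← mk_omega_toSet]
    exact Cardinal.mk_le_mk_of_subset (Set.subset_insert _ _)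

/-! ### first-order formulas -/

def memF {α : Type} {n : ℕ} (t u : memLang.Term (α ⊕ Fin n)) : memLang.BoundedFormula α n :=
  Relations.boundedFormula₂ memRel.mem t u

theorem realize_memF {κ : Cardinal.{0}} {α : Type} {n : ℕ} (t u : memLang.Term (α ⊕ Fin n))
    (v : α → HSet κ) (xs : Fin n → HSet κ) :
    (memF t u).Realize v xs ↔ (t.realize (Sum.elim v xs)).1 ∈ (u.realize (Sum.elim v xs)).1 := by
  rw [memF]
  exact Iff.rfl

theorem snoc0 {β : Type*} (xs : Fin 0 → β) (b : β) : Fin.snoc xs b = fun _ => b := by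
  funext i
  have : i = Fin.last 0 := by omega
  rw [this]
  exact Fin.snoc_last _ _

theorem mem_of_definable {κ : Cardinal.{0}} (S : memLang.ElementarySubstructure (HSet κ))
    {α : Type} (φ : memLang.BoundedFormula α 1) (v : α → HSet κ) (hv : ∀ a, v a ∈ S)
    (w : HSet κ) (hw : φ.Realize v (fun _ => w))
    (huniq : ∀ w', φ.Realize v (fun _ => w') → w' = w) : w ∈ S := by
  let v' : α → S := fun a => ⟨v a, hv a⟩
  have hcoe : (Subtype.val ∘ v' : α → HSet κ) = v := rfl
  have h1 : (φ.ex).Realize v (Subtype.val ∘ (default : Fin 0 → S)) := by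
    rw [BoundedFormula.realize_ex]
    exact ⟨w, by rw [snoc0]; exact hw⟩
  rw [← hcoe] at h1
  rw [show (Subtype.val ∘ (default : Fin 0 → S))
        = (ElementarySubstructure.subtype S) ∘ (default : Fin 0 → S) from rfl,
    show (Subtype.val ∘ v') = (ElementarySubstructure.subtype S) ∘ v' from rfl,
    ElementaryEmbedding.map_boundedFormula] at h1
  rw [BoundedFormula.realize_ex] at h1
  obtain ⟨a, ha⟩ := h1
  have h2 := (ElementaryEmbedding.map_boundedFormula (ElementarySubstructure.subtype S) φ v'
    (Fin.snoc default a)).2 ha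
  have hsnoc : ((ElementarySubstructure.subtype S) ∘ (Fin.snoc (default : Fin 0 → S) a)
      : Fin 1 → HSet κ) = fun _ => (a : HSet κ) := by
    rw [snoc0]
    rfl
  rw [show ((ElementarySubstructure.subtype S) ∘ v' : α → HSet κ) = v from rfl, hsnoc] at h2
  have := huniq _ h2
  rw [← this]
  exact a.2

/-- `s = x ∪ {x}`: free var 0 = x, bound var = s -/
def succF : memLang.BoundedFormula (Fin 1) 1 :=
  ∀' ((memF (&1) (&0)) ⇔
    ((memF (&1) (Term.var (Sum.inl 0))) ⊔ Term.bdEqual (&1) (Term.var (Sum.inl 0))))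

theorem realize_succF {κ : Cardinal.{0}} (x s : HSet κ) :
    succF.Realize (fun _ : Fin 1 => x) (fun _ : Fin 1 => s) ↔
      ∀ z : HSet κ, (z.1 ∈ s.1 ↔ z.1 ∈ x.1 ∨ z = x) := by
  simp [succF, realize_memF, Fin.snoc]

/-- `s = ∅` -/
def emptyF : memLang.BoundedFormula (Fin 0) 1 := ∀' ∼(memF (&1) (&0))

theorem realize_emptyF {κ : Cardinal.{0}} (v : Fin 0 → HSet κ) (s : HSet κ) :
    emptyF.Realize v (fun _ : Fin 1 => s) ↔ ∀ z : HSet κ, z.1 ∉ s.1 := by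
  simp [emptyF, realize_memF, Fin.snoc]

/-- `m` is the `∈`-maximum of `A`; free var 0 = A, bound var = m -/
def maxF : memLang.BoundedFormula (Fin 1) 1 :=
  (memF (&0) (Term.var (Sum.inl 0))) ⊓
    ∀' ((memF (&1) (Term.var (Sum.inl 0))) ⟹ ((memF (&1) (&0)) ⊔ Term.bdEqual (&1) (&0)))

theorem realize_maxF {κ : Cardinal.{0}} (A m : HSet κ) :
    maxF.Realize (fun _ : Fin 1 => A) (fun _ : Fin 1 => m) ↔
      m.1 ∈ A.1 ∧ ∀ z : HSet κ, z.1 ∈ A.1 → (z.1 ∈ m.1 ∨ z = m) := by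
  simp [maxF, realize_memF, Fin.snoc]

/-- `A = ω ∪ {x}`; free var 0 = ω, free var 1 = x, bound var = A -/
def insF : memLang.BoundedFormula (Fin 2) 1 :=
  ∀' ((memF (&1) (&0)) ⇔
    ((memF (&1) (Term.var (Sum.inl 0))) ⊔ Term.bdEqual (&1) (Term.var (Sum.inl 1))))

theorem realize_insF {κ : Cardinal.{0}} (w x A : HSet κ) :
    insF.Realize (fun i : Fin 2 => if i = 0 then w else x) (fun _ : Fin 1 => A) ↔
      ∀ z : HSet κ, (z.1 ∈ A.1 ↔ z.1 ∈ w.1 ∨ z = x) := by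
  simp [insF, realize_memF, Fin.snoc]

/-- `s = ω`: `∅ ∈ s`, `s` is closed under successors, and every element of `s` is `∅` or a
successor of an element of `s`. -/
def omegaF : memLang.BoundedFormula (Fin 0) 1 :=
  (∃' ((memF (&1) (&0)) ⊓ ∀' ∼(memF (&2) (&1)))) ⊓
  (∀' ((memF (&1) (&0)) ⟹
    ∃' ((memF (&2) (&0)) ⊓
      ∀' ((memF (&3) (&2)) ⇔ ((memF (&3) (&1)) ⊔ Term.bdEqual (&3) (&1)))))) ⊓
  (∀' ((memF (&1) (&0)) ⟹
    ((∀' ∼(memF (&2) (&1))) ⊔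
      ∃' ((memF (&2) (&0)) ⊓
        ∀' ((memF (&3) (&1)) ⇔ ((memF (&3) (&2)) ⊔ Term.bdEqual (&3) (&2)))))))

theorem realize_omegaF {κ : Cardinal.{0}} (v : Fin 0 → HSet κ) (s : HSet κ) :
    omegaF.Realize v (fun _ : Fin 1 => s) ↔
      ((∃ e : HSet κ, e.1 ∈ s.1 ∧ ∀ z : HSet κ, z.1 ∉ e.1) ∧
       (∀ y : HSet κ, y.1 ∈ s.1 → ∃ u : HSet κ, u.1 ∈ s.1 ∧
          ∀ w : HSet κ, (w.1 ∈ u.1 ↔ w.1 ∈ y.1 ∨ w = y))) ∧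
      (∀ y : HSet κ, y.1 ∈ s.1 → (∀ z : HSet κ, z.1 ∉ y.1) ∨
          ∃ u : HSet κ, u.1 ∈ s.1 ∧ ∀ w : HSet κ, (w.1 ∈ y.1 ↔ w.1 ∈ u.1 ∨ w = u)) := by
  simp [omegaF, realize_memF, Fin.snoc,
    show ((3 : Fin 4) : ℕ) = 3 from rfl, show ((2 : Fin 3) : ℕ) = 2 from rfl]

/-! ### elements of elementary submodels of `H_{ω₂}` -/

/-- extensionality for `HSet` elements through `HSet`-relativized quantifiers -/
theorem HSet_ext {a b : HSet κ₂} (h : ∀ z : HSet κ₂, (z.1 ∈ a.1 ↔ z.1 ∈ b.1)) : a = b := by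
  refine Subtype.ext (ZFSet.ext fun z => ⟨fun hz => ?_, fun hz => ?_⟩)
  · exact (h ⟨z, HSet_mem_of_mem a.2 hz⟩).1 hz
  · exact (h ⟨z, HSet_mem_of_mem b.2 hz⟩).2 hz

/-- membership in an `insert` through the subtype -/
theorem mem_insert_val {x w z : HSet κ₂} : z.1 ∈ insert x.1 w.1 ↔ z.1 ∈ w.1 ∨ z = x := by
  rw [ZFSet.mem_insert_iff, Subtype.ext_iff]
  exact or_comm

variable (S : memLang.ElementarySubstructure (HSet κ₂))

theorem empty_mem_S : (⟨∅, empty_mem_HSet⟩ : HSet κ₂) ∈ S := by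
  refine mem_of_definable S emptyF default (fun a => a.elim0) _ ?_ ?_
  · rw [realize_emptyF]
    exact fun z => ZFSet.notMem_empty z.1
  · intro s hs
    rw [realize_emptyF] at hs
    refine HSet_ext fun z => ⟨fun hz => absurd hz (hs z), fun hz => ?_⟩
    exact absurd hz (ZFSet.notMem_empty z.1)

theorem succ_mem_S {x : HSet κ₂} (hx : x ∈ S) :
    (⟨insert x.1 x.1, insert_mem_HSet x.2 x.2⟩ : HSet κ₂) ∈ S := by
  refine mem_of_definable S succF (fun _ => x) (fun _ => hx) _ ?_ ?_
  · rw [realize_succF]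
    exact fun z => mem_insert_val
  · intro s hs
    rw [realize_succF] at hs
    exact HSet_ext fun z => (hs z).trans mem_insert_val.symm

theorem natZ_mem_S : ∀ n, (⟨natZ n, natZ_mem_HSet n⟩ : HSet κ₂) ∈ S
  | 0 => empty_mem_S S
  | n + 1 => succ_mem_S S (natZ_mem_S n)

theorem omega_mem_S : (⟨ZFSet.omega, omega_mem_HSet⟩ : HSet κ₂) ∈ S := by
  refine mem_of_definable S omegaF default (fun a => a.elim0) _ ?_ ?_
  · rw [realize_omegaF]
    refine ⟨⟨⟨⟨∅, empty_mem_HSet⟩, ZFSet.omega_zero, fun z => ZFSet.notMem_empty z.1⟩, ?_⟩, ?_⟩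
    · intro y hy
      exact ⟨⟨insert y.1 y.1, insert_mem_HSet y.2 y.2⟩, ZFSet.omega_succ hy,
        fun w => mem_insert_val⟩
    · intro y hy
      rcases mem_omega_iff.1 hy with ⟨n, hn⟩
      match n, hn with
      | 0, hn => exact Or.inl fun z hz => by rw [hn] at hz; exact ZFSet.notMem_empty z.1 hz
      | n + 1, hn =>
        refine Or.inr ⟨⟨natZ n, natZ_mem_HSet n⟩, mem_omega_iff.2 ⟨n, rfl⟩, fun w => ?_⟩
        rw [hn]
        exact mem_insert_val (x := ⟨natZ n, natZ_mem_HSet n⟩) (w := ⟨natZ n, natZ_mem_HSet n⟩)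
  · intro s hs
    rw [realize_omegaF] at hs
    obtain ⟨⟨⟨e, hes, he⟩, hsucc⟩, hdec⟩ := hs
    -- `∅ ∈ s`
    have hempty : (∅ : ZFSet) ∈ s.1 := by
      have : e.1 = ∅ := (ZFSet.eq_empty e.1).2 fun w hw =>
        he ⟨w, HSet_mem_of_mem e.2 hw⟩ hw
      exact this ▸ hes
    -- `s` contains successors of its elements (absolutely)
    have hsucc' : ∀ y : ZFSet, y ∈ s.1 → insert y y ∈ s.1 := by
      intro y hy
      have hyH : y ∈ HSet κ₂ := HSet_mem_of_mem s.2 hy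
      obtain ⟨u, hus, hu⟩ := hsucc ⟨y, hyH⟩ hy
      have : u.1 = insert y y := by
        apply ZFSet.ext
        intro w
        constructor
        · intro hw
          rcases (hu ⟨w, HSet_mem_of_mem u.2 hw⟩).1 hw with h | h
          · exact ZFSet.mem_insert_of_mem _ h
          · rw [show w = y from congrArg Subtype.val h]
            exact ZFSet.mem_insert _ _
        · intro hw
          rcases ZFSet.mem_insert_iff.1 hw with rfl | hw'
          · exact (hu ⟨w, hyH⟩).2 (Or.inr rfl)
          · exact (hu ⟨w, HSet_mem_of_mem hyH hw'⟩).2 (Or.inl hw')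
      exact this ▸ hus
    -- hence `ω ⊆ s`
    have homega_sub : ∀ n, natZ n ∈ s.1 := by
      intro n
      induction n with
      | zero => exact hempty
      | succ n ih => exact hsucc' _ ih
    -- and `s ⊆ ω` by ∈-induction using the third clause
    have hsub : ∀ z : ZFSet, z ∈ s.1 → z ∈ ZFSet.omega.{0} := by
      intro z
      induction z using ZFSet.inductionOn with
      | _ z IH =>
        intro hz
        have hzH : z ∈ HSet κ₂ := HSet_mem_of_mem s.2 hz
        rcases hdec ⟨z, hzH⟩ hz with h | ⟨u, hus, hu⟩
        · have : z = ∅ := (ZFSet.eq_empty z).2 fun w hw =>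
            h ⟨w, HSet_mem_of_mem hzH hw⟩ hw
          rw [this]
          exact ZFSet.omega_zero
        · have hzu : z = insert u.1 u.1 := by
            apply ZFSet.ext
            intro w
            constructor
            · intro hw
              rcases (hu ⟨w, HSet_mem_of_mem hzH hw⟩).1 hw with h' | h'
              · exact ZFSet.mem_insert_of_mem _ h'
              · rw [show w = u.1 from congrArg Subtype.val h']
                exact ZFSet.mem_insert _ _
            · intro hw
              rcases ZFSet.mem_insert_iff.1 hw with rfl | hw'
              · exact (hu u).2 (Or.inr rfl)
              · exact (hu ⟨w, HSet_mem_of_mem u.2 hw'⟩).2 (Or.inl hw')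
          have huz : u.1 ∈ z := hzu ▸ ZFSet.mem_insert _ _
          have : u.1 ∈ ZFSet.omega.{0} := IH u.1 huz hus
          rw [hzu]
          exact ZFSet.omega_succ this
    refine HSet_ext fun z => ⟨fun hz => hsub z.1 hz, fun hz => ?_⟩
    rcases mem_omega_iff.1 hz with ⟨n, hn⟩
    rw [hn]
    exact homega_sub n

theorem insert_omega_mem_S {x : HSet κ₂} (hx : x ∈ S) :
    (⟨insert x.1 ZFSet.omega, insert_mem_HSet x.2 omega_mem_HSet⟩ : HSet κ₂) ∈ S := by
  refine mem_of_definable S insF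
    (fun i : Fin 2 => if i = 0 then ⟨ZFSet.omega, omega_mem_HSet⟩ else x)
    (fun i => by
      by_cases h : i = 0 <;> simp only [h, if_true, if_false] <;>
        first | exact omega_mem_S S | exact hx) _ ?_ ?_
  · rw [realize_insF]
    exact fun z => mem_insert_val (w := ⟨ZFSet.omega, omega_mem_HSet⟩)
  · intro s hs
    rw [realize_insF] at hs
    exact HSet_ext fun z => (hs z).trans (mem_insert_val (w := ⟨ZFSet.omega, omega_mem_HSet⟩)).symm

theorem mem_S_of_insert_omega_mem {x : HSet κ₂} (hord : x.1.IsOrdinal)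
    (hrank : Ordinal.omega0 ≤ x.1.rank)
    (hA : (⟨insert x.1 ZFSet.omega, insert_mem_HSet x.2 omega_mem_HSet⟩ : HSet κ₂) ∈ S) :
    x ∈ S := by
  set A : HSet κ₂ := ⟨insert x.1 ZFSet.omega, insert_mem_HSet x.2 omega_mem_HSet⟩ with hAdef
  have hxA : x.1 ∈ A.1 := ZFSet.mem_insert _ _
  refine mem_of_definable S maxF (fun _ => A) (fun _ => hA) x ?_ ?_
  · rw [realize_maxF]
    refine ⟨hxA, fun z hz => ?_⟩
    rcases ZFSet.mem_insert_iff.1 hz with h | h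
    · exact Or.inr (Subtype.ext h)
    · rcases mem_omega_iff.1 h with ⟨n, hn⟩
      exact Or.inl (by rw [hn]; exact natZ_mem_of_omega0_le_rank hord hrank n)
  · intro m hm
    rw [realize_maxF] at hm
    obtain ⟨hmA, hmax⟩ := hm
    rcases ZFSet.mem_insert_iff.1 hmA with h | h
    · exact Subtype.ext h
    · exfalso
      rcases mem_omega_iff.1 h with ⟨n, hn⟩
      rcases hmax x hxA with h' | h'
      · rw [hn] at h'
        have := ZFSet.rank_lt_of_mem h'
        rw [rank_natZ] at this
        exact absurd hrank (not_le.2 (this.trans (Ordinal.nat_lt_omega0 n)))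
      · rw [h', hn, rank_natZ] at hrank
        exact absurd hrank (not_le.2 (Ordinal.nat_lt_omega0 n))

end ZFProof

namespace ZFProof

theorem subset_step
    (M₁ M₂ : memLang.ElementarySubstructure (HSet κ₂))
    (δ : Ordinal)
    (ha : ∀ A : HSet κ₂, A ∈ M₁ → Cardinal.mk A.1.toSet = Cardinal.aleph0 →
        (∀ y ∈ A.1, y.IsOrdinal ∧ y.rank < δ) → A ∈ M₂) :
    ordTrace (M₁ : Set (HSet κ₂)) ∩ Set.Iio δ ⊆ ordTrace (M₂ : Set (HSet κ₂)) := by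
  rintro o ⟨⟨x, hxM, hxord, rfl⟩, hoδ⟩
  by_cases hsmall : x.1.rank < Ordinal.omega0
  · obtain ⟨n, hn⟩ := Ordinal.lt_omega0.1 hsmall
    exact ⟨⟨natZ n, natZ_mem_HSet n⟩, natZ_mem_S M₂ n, isOrdinal_natZ n,
      by rw [rank_natZ, ← hn]⟩
  · push_neg at hsmall
    have hAM₁ : (⟨insert x.1 ZFSet.omega, insert_mem_HSet x.2 omega_mem_HSet⟩ : HSet κ₂) ∈ M₁ :=
      insert_omega_mem_S M₁ hxM
    have hAM₂ := ha _ hAM₁ (mk_insert_omega_toSet x.1) ?_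
    · exact ⟨x, mem_S_of_insert_omega_mem M₂ hxord hsmall hAM₂, hxord, rfl⟩
    · intro y hy
      rcases ZFSet.mem_insert_iff.1 hy with rfl | hy
      · exact ⟨hxord, hoδ⟩
      · rcases mem_omega_iff.1 hy with ⟨n, rfl⟩
        exact ⟨isOrdinal_natZ n, by
          rw [rank_natZ]
          exact lt_of_lt_of_le (Ordinal.nat_lt_omega0 n) (hsmall.trans hoδ.le)⟩

theorem trace_countable (M : memLang.ElementarySubstructure (HSet κ₂))
    (hM : (M : Set (HSet κ₂)).Countable) : (ordTrace (M : Set (HSet κ₂))).Countable := by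
  have : ordTrace (M : Set (HSet κ₂)) ⊆ (fun x : HSet κ₂ => x.1.rank) '' (M : Set (HSet κ₂)) := by
    rintro o ⟨x, hx, -, rfl⟩
    exact ⟨x, hx, rfl⟩
  exact (hM.image _).mono this

end ZFProof

open ZFProof

/-- If `M₁, M₂ ≺ H_{ω₂}` are countable and compatible (each intersection is
an initial segment or an element of the other, with finite fences), then below
`δ = sup(M₁ ∩ M₂ ∩ Ord)` one of the ordinal traces is contained in the other. -/
theorem compatible_models_comparable_below_sup
    (M₁ M₂ : memLang.ElementarySubstructure (HSet (Cardinal.aleph 2)))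
    (hM₁ : (M₁ : Set (HSet (Cardinal.aleph 2))).Countable)
    (hM₂ : (M₂ : Set (HSet (Cardinal.aleph 2))).Countable)
    (T₁ T₂ : Set Ordinal)
    (hT₁ : T₁ = ordTrace (M₁ : Set (HSet (Cardinal.aleph 2))))
    (hT₂ : T₂ = ordTrace (M₂ : Set (HSet (Cardinal.aleph 2))))
    (δ : Ordinal) (hδ : δ = sSup (T₁ ∩ T₂))
    -- compatibility clause (a), for M₁ with respect to M₂ and symmetrically:
    (ha₁ : (δ ∈ T₁ → ∃ z : HSet (Cardinal.aleph 2), z ∈ M₁ ∧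
        ∀ y : ZFSet, y ∈ z.1 ↔ y.IsOrdinal ∧ y.rank ∈ T₁ ∩ T₂) ∧
      (δ ∉ T₁ → ∀ A : HSet (Cardinal.aleph 2), A ∈ M₁ →
        Cardinal.mk A.1.toSet = Cardinal.aleph0 →
        (∀ y ∈ A.1, y.IsOrdinal ∧ y.rank < δ) → A ∈ M₂))
    (ha₂ : (δ ∈ T₂ → ∃ z : HSet (Cardinal.aleph 2), z ∈ M₂ ∧
        ∀ y : ZFSet, y ∈ z.1 ↔ y.IsOrdinal ∧ y.rank ∈ T₁ ∩ T₂) ∧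
      (δ ∉ T₂ → ∀ A : HSet (Cardinal.aleph 2), A ∈ M₂ →
        Cardinal.mk A.1.toSet = Cardinal.aleph0 →
        (∀ y ∈ A.1, y.IsOrdinal ∧ y.rank < δ) → A ∈ M₁))
    -- compatibility clause (b): both fences are finite:
    (hb₁ : (fence T₁ T₂ δ).Finite) (hb₂ : (fence T₂ T₁ δ).Finite) :
    T₁ ∩ Set.Iio δ ⊆ T₂ ∨ T₂ ∩ Set.Iio δ ⊆ T₁ := by
  by_cases h1 : δ ∈ T₁
  · by_cases h2 : δ ∈ T₂
    · exfalso
      rw [hT₁] at h1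
      rw [hT₂] at h2
      obtain ⟨x, hxM, hxord, hxrank⟩ := h1
      obtain ⟨y, hyM, hyord, hyrank⟩ := h2
      have hs1 : Order.succ δ ∈ T₁ := by
        rw [hT₁]
        exact ⟨⟨insert x.1 x.1, insert_mem_HSet x.2 x.2⟩, succ_mem_S M₁ hxM,
          isOrdinal_insert hxord, by rw [rank_insert_self, hxrank]⟩
      have hs2 : Order.succ δ ∈ T₂ := by
        rw [hT₂]
        exact ⟨⟨insert y.1 y.1, insert_mem_HSet y.2 y.2⟩, succ_mem_S M₂ hyM,
          isOrdinal_insert hyord, by rw [rank_insert_self, hyrank]⟩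
      have hc : (T₁ ∩ T₂).Countable :=
        ((trace_countable M₁ hM₁).mono (hT₁ ▸ Set.inter_subset_left))
      have hbdd : BddAbove (T₁ ∩ T₂) := by
        have := hc.to_subtype
        exact Ordinal.bddAbove_of_small
      have hle : Order.succ δ ≤ δ := by
        conv_rhs => rw [hδ]
        exact le_csSup hbdd ⟨hs1, hs2⟩
      exact absurd hle (not_le.2 (Order.lt_succ δ))
    · refine Or.inr ?_
      rw [hT₁, hT₂]
      exact subset_step M₂ M₁ δ (ha₂.2 h2)
  · refine Or.inl ?_
    rw [hT₁, hT₂]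
    exact subset_step M₁ M₂ δ (ha₁.2 h1)
end

section
/- Let κ be a regular cardinal > ω. Suppose 𝒞 ⊆ Lim(κ⁺) is a club in κ⁺ consisting of limit ordinals, and ⟨C_α : α ∈ 𝒞⟩ satisfies: (i) each C_α is a club in α of order type ≤ κ; (ii) if α, β ∈ 𝒞 and α is a limit point of C_β then α ∈ 𝒞 and C_α = C_β ∩ α; (iii) if cf(α) < κ then |C_α| < κ. Then there exists a full square sequence ⟨E_i : i ∈ Lim(κ⁺)⟩ on κ⁺, i.e., each E_i is a club in i of order type ≤ κ, E_j = E_i ∩ j whenever j is a limit point of E_i, and |E_i| < κ whenever cf(i) < κ. -/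
/-- `s` is a club (closed unbounded set) in the ordinal `a`. -/
def IsClubIn (s : Set Ordinal) (a : Ordinal) : Prop :=
  (∀ b ∈ s, b < a) ∧ (∀ b < a, ∃ c ∈ s, b < c) ∧
    (∀ b, b < a → 0 < b → b = sSup (s ∩ Set.Iio b) → b ∈ s)

/-- `b` is a limit point of the set of ordinals `s`. -/
def IsLimitPt (s : Set Ordinal) (b : Ordinal) : Prop :=
  0 < b ∧ b = sSup (s ∩ Set.Iio b)

/-- The order type of a set of ordinals. -/
noncomputable def otp (s : Set Ordinal.{0}) : Ordinal.{1} :=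
  Ordinal.type ((· < ·) : s → s → Prop)

/- ### Auxiliary lemmas -/

lemma sq_bddAbove_of_lt {S : Set Ordinal} {x : Ordinal} (h : ∀ y ∈ S, y < x) : BddAbove S :=
  ⟨x, fun y hy => (h y hy).le⟩

lemma sq_sup_unbounded {S : Set Ordinal} {j : Ordinal} (h0 : 0 < j)
    (hj : j = sSup (S ∩ Set.Iio j)) :
    (S ∩ Set.Iio j).Nonempty ∧ ∀ b < j, ∃ p ∈ S ∩ Set.Iio j, b < p := by
  have hne : (S ∩ Set.Iio j).Nonempty := by
    by_contra h
    rw [Set.not_nonempty_iff_eq_empty] at h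
    rw [h, csSup_empty] at hj
    exact h0.ne' (by simpa using hj)
  exact ⟨hne, fun b hb => exists_lt_of_lt_csSup hne (by rw [← hj]; exact hb)⟩

lemma sq_sSup_sandwich {S T : Set Ordinal} {s : Ordinal} (hST : S ⊆ T) (hTs : ∀ t ∈ T, t < s)
    (hne : S.Nonempty) (h : s = sSup S) : s = sSup T :=
  le_antisymm (h.le.trans (csSup_le_csSup (sq_bddAbove_of_lt hTs) hne hST))
    (csSup_le (hne.mono hST) fun t ht => (hTs t ht).le)

/-- Inside a set `S` unbounded in `α` with `ω < cof α`, there are limit points of `S`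
unboundedly often below `α`. -/
lemma sq_exists_sup_pt (S : Set Ordinal.{0}) (α : Ordinal.{0}) (hS : ∀ c ∈ S, c < α)
    (hunb : ∀ b < α, ∃ c ∈ S, b < c) (hcof : Cardinal.aleph0 < α.cof) {β : Ordinal.{0}}
    (hβ : β < α) :
    ∃ s, β < s ∧ s < α ∧ (S ∩ Set.Iio s).Nonempty ∧ s = sSup (S ∩ Set.Iio s) := by
  let nxt : Ordinal → Ordinal := fun x => if h : x < α then (hunb x h).choose else 0
  have hnxt : ∀ x, x < α → nxt x ∈ S ∧ x < nxt x ∧ nxt x < α := by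
    intro x hx
    have h1 := (hunb x hx).choose_spec
    have h2 : nxt x = (hunb x hx).choose := dif_pos hx
    rw [h2]
    exact ⟨h1.1, h1.2, hS _ h1.1⟩
  let f : ℕ → Ordinal := fun n => Nat.rec (nxt β) (fun _ ih => nxt ih) n
  have hfs : ∀ n, f (n + 1) = nxt (f n) := fun _ => rfl
  have key : ∀ n, f n ∈ S ∧ f n < α ∧ β < f n := by
    intro n
    induction n with
    | zero =>
      obtain ⟨h1, h2, h3⟩ := hnxt β hβ
      exact ⟨h1, h3, h2⟩
    | succ n ih =>
      obtain ⟨h1, h2, h3⟩ := hnxt (f n) ih.2.1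
      rw [hfs]
      exact ⟨h1, h3, ih.2.2.trans h2⟩
  have hmono : ∀ n, f n < f (n + 1) := by
    intro n
    rw [hfs]
    exact (hnxt (f n) (key n).2.1).2.1
  set s := ⨆ n, f n with hs
  have hsα : s < α := by
    rw [hs]
    exact Ordinal.iSup_lt_ord (a := α) (by rw [Cardinal.mk_nat]; exact hcof)
      (fun n => (key n).2.1)
  have hle : ∀ n, f n ≤ s := fun n => le_ciSup (Ordinal.bddAbove_range f) n
  have hlt : ∀ n, f n < s := fun n => (hmono n).trans_le (hle (n + 1))
  refine ⟨s, (key 0).2.2.trans_le (hle 0), hsα, ⟨f 0, (key 0).1, hlt 0⟩, ?_⟩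
  apply le_antisymm
  · exact ciSup_le fun n =>
      le_csSup (sq_bddAbove_of_lt fun y hy => hy.2) ⟨(key n).1, hlt n⟩
  · exact csSup_le ⟨f 0, (key 0).1, hlt 0⟩ fun t ht => ht.2.le

lemma sq_otp_le_otp {S T : Set Ordinal.{0}} (f : Ordinal → Ordinal)
    (hmem : ∀ a ∈ S, f a ∈ T) (hmono : ∀ a ∈ S, ∀ b ∈ S, a < b → f a < f b) :
    otp S ≤ otp T := by
  have hiff : ∀ a b : S, ((⟨f a.1, hmem a.1 a.2⟩ : T) < ⟨f b.1, hmem b.1 b.2⟩) ↔ a < b := by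
    intro a b
    rw [Subtype.mk_lt_mk]
    constructor
    · intro h
      rcases lt_trichotomy a b with h1 | h1 | h1
      · exact h1
      · exact absurd h (by rw [h1]; exact lt_irrefl _)
      · exact absurd (hmono b.1 b.2 a.1 a.2 (Subtype.coe_lt_coe.2 h1)) (not_lt.2 h.le)
    · intro h
      exact hmono a.1 a.2 b.1 b.2 (Subtype.coe_lt_coe.2 h)
  have hinj : Function.Injective (fun a : S => (⟨f a.1, hmem a.1 a.2⟩ : T)) := by
    intro a b hab
    have hv : f a.1 = f b.1 := congrArg Subtype.val hab
    rcases lt_trichotomy a b with h | h | h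
    · exact absurd ((hiff a b).2 h) (by rw [Subtype.mk_lt_mk, hv]; exact lt_irrefl _)
    · exact h
    · exact absurd ((hiff b a).2 h) (by rw [Subtype.mk_lt_mk, hv]; exact lt_irrefl _)
  exact (RelEmbedding.mk ⟨fun a : S => (⟨f a.1, hmem a.1 a.2⟩ : T), hinj⟩
    (fun {a b} => hiff a b)).ordinal_type_le

lemma sq_otp_lt_ord {S : Set Ordinal.{0}} {c : Cardinal.{1}} (h : Cardinal.mk S < c) :
    otp S < c.ord := by
  rw [Cardinal.lt_ord]
  rwa [otp, Ordinal.card_type]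

/-- A square-like sequence indexed by a club `𝒞 ⊆ Lim(κ⁺)` can be extended
to a full square sequence on all of `Lim(κ⁺)`. -/
theorem square_like_to_square (κ : Cardinal.{0}) (hreg : κ.IsRegular)
    (hunc : Cardinal.aleph0 < κ)
    (𝒞 : Set Ordinal) (C : Ordinal → Set Ordinal)
    (h𝒞club : IsClubIn 𝒞 (Order.succ κ).ord)
    (h𝒞lim : ∀ α ∈ 𝒞, Order.IsSuccLimit α)
    (hclub : ∀ α ∈ 𝒞, IsClubIn (C α) α ∧ otp (C α) ≤ (Cardinal.lift.{1} κ).ord)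
    (hcoh : ∀ β ∈ 𝒞, ∀ α, IsLimitPt (C β) α → α ∈ 𝒞 ∧ C α = C β ∩ Set.Iio α)
    (hnontriv : ∀ α ∈ 𝒞, α.cof < κ → Cardinal.mk (C α) < Cardinal.lift.{1} κ) :
    ∃ E : Ordinal → Set Ordinal,
      ∀ i, i < (Order.succ κ).ord → Order.IsSuccLimit i →
        IsClubIn (E i) i ∧ otp (E i) ≤ (Cardinal.lift.{1} κ).ord ∧
        (∀ j, IsLimitPt (E i) j → E j = E i ∩ Set.Iio j) ∧
        (i.cof < κ → Cardinal.mk (E i) < Cardinal.lift.{1} κ) := by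
  classical
  obtain ⟨h𝒞b, h𝒞u, h𝒞c⟩ := h𝒞club
  set ν := (Order.succ κ).ord with hν
  have hℵν : Cardinal.aleph0 < ν.cof := by
    rw [hν, (Cardinal.isRegular_succ hreg.1).cof_eq]
    exact hunc.trans (Order.lt_succ κ)
  -- the set of limit points of 𝒞 below ν
  set 𝒟 : Set Ordinal := {β | β < ν ∧ 0 < β ∧ β = sSup (𝒞 ∩ Set.Iio β)} with h𝒟
  have h𝒟sub : 𝒟 ⊆ 𝒞 := fun β hβ => h𝒞c β hβ.1 hβ.2.1 hβ.2.2
  have h𝒟unb : ∀ b < ν, ∃ d ∈ 𝒟, b < d := by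
    intro b hb
    obtain ⟨s, hbs, hsν, _, heq⟩ := sq_exists_sup_pt 𝒞 ν h𝒞b h𝒞u hℵν hb
    exact ⟨s, ⟨hsν, (zero_le (a := b)).trans_lt hbs, heq⟩, hbs⟩
  set 𝒟' : Set Ordinal := 𝒟 ∪ Set.Ici ν with h𝒟'
  have h𝒟'unb : ¬ BddAbove 𝒟' := by
    rintro ⟨b, hb⟩
    have h1 : max b ν < max b ν + 1 := by
      rw [Ordinal.add_one_eq_succ]
      exact Order.lt_succ _
    have h2 : max b ν + 1 ∈ 𝒟' := Or.inr ((le_max_right b ν).trans h1.le)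
    exact absurd ((le_max_left b ν).trans_lt (h1.trans_le (hb h2))) (lt_irrefl b)
  set γ : Ordinal → Ordinal := Ordinal.enumOrd 𝒟' with hγdef
  have hγmono : StrictMono γ := Ordinal.enumOrd_strictMono h𝒟'unb
  have hγmem : ∀ i, γ i ∈ 𝒟' := fun i => Ordinal.enumOrd_mem h𝒟'unb i
  have hγlt : ∀ i, i < ν → γ i < ν := by
    intro i
    induction i using Ordinal.induction with
    | h i IH =>
      intro hi
      have hbs : Ordinal.bsup i (fun j _ => γ j) < ν := by
        apply Ordinal.bsup_lt_ord
        · rw [hν, (Cardinal.isRegular_succ hreg.1).cof_eq]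
          exact Cardinal.lt_ord.1 hi
        · exact fun j hj => IH j hj (hj.trans hi)
      obtain ⟨d, hd𝒟, hdgt⟩ := h𝒟unb _ hbs
      have hle : γ i ≤ d := Ordinal.enumOrd_le_of_forall_lt (Or.inl hd𝒟)
        (fun j hj => (Ordinal.le_bsup (fun j _ => γ j) j hj).trans_lt hdgt)
      exact hle.trans_lt hd𝒟.1
  have hγD : ∀ i, i < ν → γ i ∈ 𝒟 := fun i hi =>
    (hγmem i).resolve_right (fun h => absurd (hγlt i hi) (not_lt.2 h))
  have hγC : ∀ i, i < ν → γ i ∈ 𝒞 := fun i hi => h𝒟sub (hγD i hi)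
  -- 𝒟' is closed
  have h𝒟'cl : IsClosed 𝒟' := by
    rw [Ordinal.isClosed_iff_iSup]
    intro ι hι f hf
    by_cases hsup : ∃ i, f i = ⨆ j, f j
    · obtain ⟨i, hi⟩ := hsup
      rw [← hi]
      exact hf i
    · push_neg at hsup
      have hflt : ∀ i, f i < ⨆ j, f j := fun i =>
        (le_ciSup (Ordinal.bddAbove_range f) i).lt_of_ne (hsup i)
      by_cases hν' : (⨆ j, f j) < ν
      · left
        have hfD : ∀ i, f i ∈ 𝒟 := fun i =>
          (hf i).resolve_right (fun h => absurd ((hflt i).trans hν') (not_lt.2 h))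
        refine ⟨hν', (zero_le (a := _)).trans_lt (hflt hι.some), ?_⟩
        apply le_antisymm
        · exact ciSup_le fun i =>
            le_csSup (sq_bddAbove_of_lt fun y hy => hy.2) ⟨h𝒟sub (hfD i), hflt i⟩
        · exact csSup_le ⟨f hι.some, h𝒟sub (hfD hι.some), hflt hι.some⟩ fun t ht => ht.2.le
      · exact Or.inr (not_lt.1 hν')
  have hγnorm : Order.IsNormal γ := (Ordinal.enumOrd_isNormal_iff_isClosed h𝒟'unb).2 h𝒟'cl
  -- continuity of γ at sups
  have hγsup : ∀ (X : Set Ordinal) (j : Ordinal), 0 < j → j = sSup (X ∩ Set.Iio j) →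
      γ j = sSup (γ '' (X ∩ Set.Iio j)) := by
    intro X j h0 hj
    obtain ⟨hne, hub⟩ := sq_sup_unbounded h0 hj
    have hjlim : Order.IsSuccLimit j := by
      refine Ordinal.isSuccLimit_iff.2 ⟨h0.ne', Order.isSuccPrelimit_of_succ_lt fun a ha => ?_⟩
      obtain ⟨p, hp, hap⟩ := hub a ha
      exact (Order.succ_le_of_lt hap).trans_lt hp.2
    have hbddim : BddAbove (γ '' (X ∩ Set.Iio j)) :=
      sq_bddAbove_of_lt (by rintro y ⟨p, hp, rfl⟩; exact hγmono hp.2)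
    apply le_antisymm
    · rw [hγnorm.le_iff_forall_le hjlim]
      intro b hb
      obtain ⟨p, hp, hbp⟩ := hub b hb
      exact (hγmono.monotone hbp.le).trans (le_csSup hbddim (Set.mem_image_of_mem γ hp))
    · exact csSup_le (hne.image γ) (by rintro y ⟨p, hp, rfl⟩; exact (hγmono hp.2).le)
  -- unbounded subsets of C α ∩ 𝒟 at points of uncountable cofinality
  have hCD : ∀ α, α ∈ 𝒞 → α < ν → Cardinal.aleph0 < α.cof → ∀ b < α,
      ∃ s, (s ∈ C α ∧ s ∈ 𝒟) ∧ b < s := by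
    intro α hα hαν hcof b hb
    obtain ⟨⟨hCb, hCu, hCc⟩, _⟩ := hclub α hα
    set L : Set Ordinal := {ℓ | ℓ < α ∧ 0 < ℓ ∧ ℓ = sSup (C α ∩ Set.Iio ℓ)} with hL
    have hLsub : ∀ ℓ ∈ L, ℓ ∈ C α := fun ℓ hℓ => hCc ℓ hℓ.1 hℓ.2.1 hℓ.2.2
    have hL𝒞 : ∀ ℓ ∈ L, ℓ ∈ 𝒞 := fun ℓ hℓ => (hcoh α hα ℓ ⟨hℓ.2.1, hℓ.2.2⟩).1
    have hLunb : ∀ c < α, ∃ ℓ ∈ L, c < ℓ := by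
      intro c hc
      obtain ⟨s, hcs, hsα, _, heq⟩ := sq_exists_sup_pt (C α) α hCb hCu hcof hc
      exact ⟨s, ⟨hsα, (zero_le (a := c)).trans_lt hcs, heq⟩, hcs⟩
    obtain ⟨s, hbs, hsα, hne, heq⟩ :=
      sq_exists_sup_pt L α (fun ℓ hℓ => hℓ.1) hLunb hcof hb
    have h0s : 0 < s := (zero_le (a := b)).trans_lt hbs
    have hsC : s = sSup (C α ∩ Set.Iio s) :=
      sq_sSup_sandwich (fun x hx => ⟨hLsub x hx.1, hx.2⟩) (fun t ht => ht.2) hne heq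
    have hs𝒞 : s = sSup (𝒞 ∩ Set.Iio s) :=
      sq_sSup_sandwich (fun x hx => ⟨hL𝒞 x hx.1, hx.2⟩) (fun t ht => ht.2) hne heq
    exact ⟨s, ⟨hCc s hsα h0s hsC, hsα.trans hαν, h0s, hs𝒞⟩, hbs⟩
  -- the pulled-back sets
  set P : Ordinal → Set Ordinal := fun i => {e | e < i ∧ γ e ∈ C (γ i)} with hP
  have hPbdd : ∀ i, BddAbove (P i) := fun i => sq_bddAbove_of_lt (fun e he => he.1)
  have hsPle : ∀ i, sSup (P i) ≤ i := fun i => csSup_le' (fun e he => he.1.le)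
  -- tails
  set Tl : Ordinal → Set Ordinal := fun i =>
    if h : ∃ g : ℕ → Ordinal, (∀ n, g n < g (n + 1)) ∧ (∀ n, g n < i) ∧
        (∀ b < i, ∃ n, b < g n) ∧ sSup (P i) < g 0
    then Set.range h.choose else ∅ with hTl
  set E : Ordinal → Set Ordinal := fun i => P i ∪ (if sSup (P i) = i then ∅ else Tl i)
    with hE
  have hEdef : ∀ i, sSup (P i) = i → E i = P i := by
    intro i h
    show P i ∪ (if sSup (P i) = i then ∅ else Tl i) = P i
    rw [if_pos h, Set.union_empty]
  have hEdef' : ∀ i, sSup (P i) ≠ i → E i = P i ∪ Tl i := by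
    intro i h
    show P i ∪ (if sSup (P i) = i then ∅ else Tl i) = P i ∪ Tl i
    rw [if_neg h]
  have hPE : ∀ i, P i ⊆ E i := by
    intro i e he
    rw [hE]
    exact Set.mem_union_left _ he
  -- P i is unbounded in i whenever cof i > ω
  have hunbP : ∀ i, i < ν → Order.IsSuccLimit i → Cardinal.aleph0 < i.cof → sSup (P i) = i := by
    intro i hiν hilim hcof
    refine le_antisymm (hsPle i) ?_
    by_contra h
    push_neg at h
    obtain ⟨s, ⟨hsC, hs𝒟⟩, hbs⟩ := hCD (γ i) (hγC i hiν) (hγlt i hiν)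
      (by rw [Ordinal.cof_map_of_isNormal hγnorm hilim]; exact hcof) (γ (sSup (P i))) (hγmono h)
    obtain ⟨e, he⟩ := Ordinal.enumOrd_surjective h𝒟'unb (Or.inl hs𝒟 : s ∈ 𝒟')
    have he' : γ e = s := by rw [hγdef]; exact he
    have hsγ : s < γ i := (hclub (γ i) (hγC i hiν)).1.1 s hsC
    have hei : e < i := hγmono.lt_iff_lt.1 (by rw [he']; exact hsγ)
    have heP : e ∈ P i := ⟨hei, by rw [he']; exact hsC⟩
    have h1 : e ≤ sSup (P i) := le_csSup (hPbdd i) heP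
    have h2 : s ≤ γ (sSup (P i)) := by
      rw [← he']
      exact hγmono.monotone h1
    exact absurd hbs (not_lt.2 h2)
  -- the tail exists when P i is bounded
  have hTail : ∀ i, i < ν → Order.IsSuccLimit i → sSup (P i) ≠ i →
      ∃ g : ℕ → Ordinal, Tl i = Set.range g ∧ (∀ n, g n < g (n + 1)) ∧ (∀ n, g n < i) ∧
        (∀ b < i, ∃ n, b < g n) ∧ sSup (P i) < g 0 := by
    intro i hiν hilim hne
    have hsP : sSup (P i) < i := (hsPle i).lt_of_ne hne
    have hcof : i.cof = Cardinal.aleph0 :=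
      le_antisymm (not_lt.1 fun h => hne (hunbP i hiν hilim h))
        (Ordinal.aleph0_le_cof.2 hilim)
    obtain ⟨ι, f, hlsub, hmk⟩ := Ordinal.exists_lsub_cof i
    rw [hcof] at hmk
    obtain ⟨eqv⟩ : Nonempty (ι ≃ ℕ) := Cardinal.eq.1 (by rw [hmk, Cardinal.mk_nat])
    set f' : ℕ → Ordinal := fun n => f (eqv.symm n) with hf'
    have hf'lt : ∀ n, f' n < i := fun n => by rw [← hlsub]; exact Ordinal.lt_lsub f _
    have hf'cof : ∀ b < i, ∃ n, b ≤ f' n := by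
      intro b hb
      rw [← hlsub, Ordinal.lt_lsub_iff] at hb
      obtain ⟨j, hj⟩ := hb
      exact ⟨eqv j, by rw [hf']; simpa using hj⟩
    set g : ℕ → Ordinal := fun n =>
      Nat.rec (max (f' 0) (sSup (P i)) + 1) (fun m ih => max (f' (m + 1)) ih + 1) n with hg
    have hg0 : g 0 = max (f' 0) (sSup (P i)) + 1 := rfl
    have hgs : ∀ n, g (n + 1) = max (f' (n + 1)) (g n) + 1 := fun _ => rfl
    have hlt1 : ∀ x, x < i → x + 1 < i := fun x hx => by
      rw [Ordinal.add_one_eq_succ]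
      exact hilim.succ_lt hx
    have hself : ∀ x : Ordinal, x < x + 1 := fun x => by
      rw [Ordinal.add_one_eq_succ]
      exact Order.lt_succ x
    have hglt : ∀ n, g n < i := by
      intro n
      induction n with
      | zero => exact hlt1 _ (max_lt (hf'lt 0) hsP)
      | succ n ih => exact hlt1 _ (max_lt (hf'lt (n + 1)) ih)
    have hgmono : ∀ n, g n < g (n + 1) := by
      intro n
      rw [hgs]
      exact (le_max_right _ _).trans_lt (hself _)
    have hf'g : ∀ n, f' n < g n := by
      intro n
      cases n with
      | zero => exact (le_max_left _ _).trans_lt (hself _)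
      | succ n =>
        rw [hgs]
        exact (le_max_left _ _).trans_lt (hself _)
    have hgcof : ∀ b < i, ∃ n, b < g n := by
      intro b hb
      obtain ⟨n, hn⟩ := hf'cof b hb
      exact ⟨n, hn.trans_lt (hf'g n)⟩
    have hg0' : sSup (P i) < g 0 := by
      rw [hg0]
      exact (le_max_right _ _).trans_lt (hself _)
    have hEx : ∃ g0 : ℕ → Ordinal, (∀ n, g0 n < g0 (n + 1)) ∧ (∀ n, g0 n < i) ∧
        (∀ b < i, ∃ n, b < g0 n) ∧ sSup (P i) < g0 0 := ⟨g, hgmono, hglt, hgcof, hg0'⟩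
    refine ⟨hEx.choose, ?_, hEx.choose_spec.1, hEx.choose_spec.2.1,
      hEx.choose_spec.2.2.1, hEx.choose_spec.2.2.2⟩
    rw [hTl]
    exact dif_pos hEx
  refine ⟨E, ?_⟩
  intro i hiν hilim
  have hγiC : γ i ∈ 𝒞 := hγC i hiν
  obtain ⟨⟨hCb, hCu, hCc⟩, hCotp⟩ := hclub (γ i) hγiC
  -- every element of E i is below i
  have hEb : ∀ x ∈ E i, x < i := by
    intro x hx
    by_cases hcase : sSup (P i) = i
    · rw [hEdef i hcase] at hx
      exact hx.1
    · obtain ⟨g, hTg, _, hglt, _, _⟩ := hTail i hiν hilim hcase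
      rw [hEdef' i hcase, hTg] at hx
      rcases hx with h | h
      · exact h.1
      · obtain ⟨n, rfl⟩ := h
        exact hglt n
  -- limit points of E i are limit points of P i
  have hLP : ∀ j, 0 < j → j < i → j = sSup (E i ∩ Set.Iio j) →
      j = sSup (P i ∩ Set.Iio j) ∧ E i ∩ Set.Iio j = P i ∩ Set.Iio j := by
    intro j h0 hji hj
    by_cases hcase : sSup (P i) = i
    · have heq : E i ∩ Set.Iio j = P i ∩ Set.Iio j := by rw [hEdef i hcase]
      exact ⟨by rw [← heq]; exact hj, heq⟩
    · obtain ⟨g, hTg, hgmono, hglt, hgcof, hg0⟩ := hTail i hiν hilim hcase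
      have hEi : E i = P i ∪ Set.range g := by rw [hEdef' i hcase, hTg]
      have hgm : Monotone g := (strictMono_nat_of_lt_succ hgmono).monotone
      have hdisj : Set.range g ∩ Set.Iio j = ∅ := by
        by_contra hne
        obtain ⟨x, ⟨n, rfl⟩, hxj⟩ := Set.nonempty_iff_ne_empty.2 hne
        obtain ⟨N, hN⟩ := hgcof j hji
        have hstep : ∃ m, g m < j ∧ ¬ g (m + 1) < j := by
          by_contra hall
          push_neg at hall
          have hchain : ∀ k, g (n + k) < j := by
            intro k
            induction k with
            | zero => simpa using hxj
            | succ k ih => simpa [← Nat.add_assoc] using hall _ ih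
          have hgN : g N < j := by
            rcases le_total n N with h | h
            · have := hchain (N - n)
              rwa [Nat.add_sub_cancel' h] at this
            · exact (hgm h).trans_lt (by simpa using hxj)
          exact absurd hN (not_lt.2 hgN.le)
        obtain ⟨m, hm, hm1⟩ := hstep
        have hub : ∀ y ∈ E i ∩ Set.Iio j, y ≤ g m := by
          rintro y ⟨hy, hyj⟩
          rw [hEi] at hy
          rcases hy with h | h
          · exact (le_csSup (hPbdd i) h).trans ((hg0.le).trans (hgm (Nat.zero_le m)))
          · obtain ⟨k, rfl⟩ := h
            by_contra hk
            push_neg at hk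
            have hk' : m + 1 ≤ k := by
              by_contra h'
              push_neg at h'
              exact absurd (hgm (Nat.lt_succ_iff.1 h')) (not_le.2 hk)
            exact absurd hyj (not_lt.2 ((not_lt.1 hm1).trans (hgm hk')))
        have h1 : sSup (E i ∩ Set.Iio j) ≤ g m := csSup_le' hub
        rw [← hj] at h1
        exact absurd hm (not_lt.2 h1)
      have hEPj : E i ∩ Set.Iio j = P i ∩ Set.Iio j := by
        rw [hEi, Set.union_inter_distrib_right, hdisj, Set.union_empty]
      exact ⟨by rw [← hEPj]; exact hj, hEPj⟩
  -- limit points of P i are closed under the picture via γ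
  have hCL : ∀ j, 0 < j → j < i → j = sSup (P i ∩ Set.Iio j) →
      j ∈ P i ∧ γ j ∈ 𝒞 ∧ C (γ j) = C (γ i) ∩ Set.Iio (γ j) := by
    intro j h0 hji hj
    obtain ⟨hne, _⟩ := sq_sup_unbounded h0 hj
    have hγj : γ j = sSup (γ '' (P i ∩ Set.Iio j)) := hγsup (P i) j h0 hj
    have himg : γ '' (P i ∩ Set.Iio j) ⊆ C (γ i) ∩ Set.Iio (γ j) := by
      rintro y ⟨p, hp, rfl⟩
      exact ⟨hp.1.2, hγmono hp.2⟩
    have hγjC : γ j = sSup (C (γ i) ∩ Set.Iio (γ j)) :=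
      sq_sSup_sandwich himg (fun t ht => ht.2) (hne.image γ) hγj
    have h0γj : 0 < γ j := by
      obtain ⟨p, hp⟩ := hne
      exact (zero_le (a := γ p)).trans_lt (hγmono hp.2)
    have hmemC : γ j ∈ C (γ i) := hCc (γ j) (hγmono hji) h0γj hγjC
    obtain ⟨h𝒞j, hCj⟩ := hcoh (γ i) hγiC (γ j) ⟨h0γj, hγjC⟩
    exact ⟨⟨hji, hmemC⟩, h𝒞j, hCj⟩
  -- cardinality of C (γ i)
  have hcofγ : (γ i).cof = i.cof := Ordinal.cof_map_of_isNormal hγnorm hilim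
  have hCcard : i.cof < κ → Cardinal.mk (C (γ i)) < Cardinal.lift.{1} κ := fun h =>
    hnontriv (γ i) hγiC (by rw [hcofγ]; exact h)
  have hPcard : Cardinal.mk (P i) ≤ Cardinal.mk (C (γ i)) := by
    apply Cardinal.mk_le_of_injective (f := fun e : P i => (⟨γ e.1, e.2.2⟩ : C (γ i)))
    intro a b hab
    have h1 : γ a.1 = γ b.1 := congrArg Subtype.val hab
    exact Subtype.ext (hγmono.injective h1)
  have hcof_sm : sSup (P i) ≠ i → i.cof < κ := by
    intro hcase
    have h1 : ¬ Cardinal.aleph0 < i.cof := fun h => hcase (hunbP i hiν hilim h)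
    exact (not_lt.1 h1).trans_lt hunc
  have hEcard_tail : sSup (P i) ≠ i → Cardinal.mk (E i) < Cardinal.lift.{1} κ := by
    intro hcase
    obtain ⟨g, hTg, hgmono, _, _, _⟩ := hTail i hiν hilim hcase
    rw [hEdef' i hcase, hTg]
    have h1 : Cardinal.mk (P i ∪ Set.range g : Set Ordinal) ≤
        Cardinal.mk (P i) + Cardinal.mk (Set.range g) := Cardinal.mk_union_le _ _
    have h2 : Cardinal.mk (Set.range g) ≤ Cardinal.aleph0 := by
      have h3 := Cardinal.mk_range_le_lift (f := g)
      rwa [Cardinal.lift_uzero, Cardinal.mk_nat, Cardinal.lift_aleph0] at h3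
    have h4 : Cardinal.aleph0 < Cardinal.lift.{1} κ := by
      rw [← Cardinal.lift_aleph0.{1, 0}]
      exact Cardinal.lift_lt.2 hunc
    exact h1.trans_lt (Cardinal.add_lt_of_lt (Cardinal.aleph0_le_lift.2 hreg.1)
      (hPcard.trans_lt (hCcard (hcof_sm hcase))) (h2.trans_lt h4))
  refine ⟨⟨hEb, ?_, ?_⟩, ?_, ?_, ?_⟩
  -- unboundedness
  · intro b hb
    by_cases hcase : sSup (P i) = i
    · have hPi : P i ∩ Set.Iio i = P i :=
        Set.inter_eq_self_of_subset_left (fun e he => he.1)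
      have := (sq_sup_unbounded hilim.pos (by rw [hPi]; exact hcase.symm)).2 b hb
      obtain ⟨p, hp, hbp⟩ := this
      exact ⟨p, hPE i hp.1, hbp⟩
    · obtain ⟨g, hTg, _, _, hgcof, _⟩ := hTail i hiν hilim hcase
      obtain ⟨n, hn⟩ := hgcof b hb
      exact ⟨g n, by rw [hEdef' i hcase, hTg]; exact Set.mem_union_right _ ⟨n, rfl⟩, hn⟩
  -- closedness
  · intro b hbi h0 heq
    exact hPE i (hCL b h0 hbi (hLP b h0 hbi heq).1).1
  -- order type
  · by_cases hcase : sSup (P i) = i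
    · rw [hEdef i hcase]
      exact (sq_otp_le_otp γ (fun a ha => ha.2) (fun a _ b _ hab => hγmono hab)).trans hCotp
    · exact (sq_otp_lt_ord (hEcard_tail hcase)).le
  -- coherence
  · rintro j ⟨h0, hj⟩
    rcases lt_trichotomy j i with hji | rfl | hij
    · obtain ⟨hjP, hEPj⟩ := hLP j h0 hji hj
      obtain ⟨_, _, hCj⟩ := hCL j h0 hji hjP
      have hPj : P j = P i ∩ Set.Iio j := by
        ext e
        simp only [hP, Set.mem_setOf_eq, Set.mem_inter_iff, Set.mem_Iio]
        constructor
        · rintro ⟨hej, heC⟩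
          rw [hCj] at heC
          exact ⟨⟨hej.trans hji, heC.1⟩, hej⟩
        · rintro ⟨⟨_, heC⟩, hej⟩
          exact ⟨hej, by rw [hCj]; exact ⟨heC, hγmono hej⟩⟩
      have hsup : sSup (P j) = j := by rw [hPj]; exact hjP.symm
      rw [hEdef j hsup, hPj, ← hEPj]
    · exact (Set.inter_eq_self_of_subset_left (fun x hx => hEb x hx)).symm
    · exfalso
      have hsub2 : E i ∩ Set.Iio j = E i :=
        Set.inter_eq_self_of_subset_left (fun x hx => (hEb x hx).trans hij)
      have hj' : j = sSup (E i) := hj.trans (congrArg sSup hsub2)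
      have h1 : sSup (E i) ≤ i := csSup_le' (fun x hx => (hEb x hx).le)
      rw [← hj'] at h1
      exact absurd hij (not_lt.2 h1)
  -- cardinality
  · intro hci
    by_cases hcase : sSup (P i) = i
    · rw [hEdef i hcase]
      exact hPcard.trans_lt (hCcard hci)
    · exact hEcard_tail hcase
end
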